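/- Let a : ℕ → ℂ be a multiplicative function satisfying, for each prime q, the recurrence a(q^r) = a(q)a(q^{r-1}) − q·a(q^{r-2}) for r ≥ 2 with a(1) = 1. Assume a(p) ≠ 0 implies a(p^r) ≠ 0 for all r ≥ 1, and assume a(p) ≠ 0 for all primes p ≡ 1 (mod 4) with p ∤ 6. Then a(n) ≠ 0 for every n coprime to 6 that is a sum of two squares. -/

import Mathlib

/-- If `a q = 0` at a prime `q`, then the Hecke recurrence forces
`a (q ^ (2*s)) = (-q)^s`. -/
lemma hecke_even_pow (a : ℕ → ℂ) (h1 : a 1 = 1) {q : ℕ} (_hq : q.Prime)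
    (hrec : ∀ r : ℕ, 2 ≤ r →
      a (q ^ r) = a q * a (q ^ (r - 1)) - (q : ℂ) * a (q ^ (r - 2)))
    (h0 : a q = 0) : ∀ s : ℕ, a (q ^ (2 * s)) = (-(q : ℂ)) ^ s := by
  intro s
  induction s with
  | zero => simpa using h1
  | succ s ih =>
      have h2 : 2 ≤ 2 * (s + 1) := by omega
      have := hrec (2 * (s + 1)) h2
      have e2 : 2 * (s + 1) - 2 = 2 * s := by omega
      rw [h0, e2, ih] at this
      rw [this]
      ring

/-- Abstract key step of the main theorem. Let `a : ℕ → ℂ` be multiplicative with `a 1 = 1`,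
satisfying the weight-2 Hecke recurrence `a (q^r) = a q · a (q^(r-1)) − q · a (q^(r-2))` at
every prime `q`. If `a p ≠ 0` implies `a (p^r) ≠ 0` for all `r ≥ 1`, and `a p ≠ 0` for all
primes `p ≡ 1 (mod 4)` with `p ∤ 6`, then `a n ≠ 0` for every `n` coprime to `6` that is a sum
of two squares. -/
theorem multiplicative_hecke_nonvanishing (a : ℕ → ℂ)
    (h1 : a 1 = 1)
    (hmul : ∀ m n : ℕ, Nat.Coprime m n → a (m * n) = a m * a n)
    (hrec : ∀ q : ℕ, q.Prime → ∀ r : ℕ, 2 ≤ r →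
      a (q ^ r) = a q * a (q ^ (r - 1)) - (q : ℂ) * a (q ^ (r - 2)))
    (hpow : ∀ p : ℕ, p.Prime → a p ≠ 0 → ∀ r : ℕ, 1 ≤ r → a (p ^ r) ≠ 0)
    (hsplit : ∀ p : ℕ, p.Prime → p % 4 = 1 → ¬ p ∣ 6 → a p ≠ 0) :
    ∀ n : ℕ, Nat.Coprime n 6 → (∃ x y : ℤ, (n : ℤ) = x ^ 2 + y ^ 2) → a n ≠ 0 := by
  intro n hcop hsq
  have hn0 : n ≠ 0 := by
    rintro rfl
    simp [Nat.Coprime] at hcop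
  -- n is a sum of two natural squares
  obtain ⟨x, y, hxy⟩ := hsq
  have hnat : ∃ u v : ℕ, n = u ^ 2 + v ^ 2 := by
    refine ⟨x.natAbs, y.natAbs, ?_⟩
    have : (n : ℤ) = (x.natAbs : ℤ) ^ 2 + (y.natAbs : ℤ) ^ 2 := by
      rw [hxy]; simp [sq_abs]
    exact_mod_cast this
  have heven : ∀ {q : ℕ}, q.Prime → q % 4 = 3 → Even (padicValNat q n) :=
    fun {q} hq h3 => by
      by_cases hqn : q ∣ n
      · exact Nat.eq_sq_add_sq_iff.mp hnat q (Nat.mem_primeFactors.mpr ⟨hq, hqn, hn0⟩) h3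
      · rw [padicValNat.eq_zero_of_not_dvd hqn]; exact Even.zero
  rw [Nat.multiplicative_factorization a hmul h1 hn0]
  rw [Finsupp.prod]
  apply Finset.prod_ne_zero_iff.mpr
  intro p hp
  have hpprime : p.Prime := Nat.prime_of_mem_primeFactors
    (by rwa [Nat.support_factorization] at hp)
  have hpdvd : p ∣ n := Nat.dvd_of_mem_primeFactors
    (by rwa [Nat.support_factorization] at hp)
  have hk1 : 1 ≤ n.factorization p := by
    have := Finsupp.mem_support_iff.mp hp
    omega
  have hpnot6 : ¬ p ∣ 6 := fun hd => by
    have : p = 1 := Nat.Coprime.eq_one_of_dvd (Nat.Coprime.coprime_dvd_left hpdvd hcop) hd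
    exact hpprime.one_lt.ne' this
  have hp2 : p ≠ 2 := fun h => hpnot6 (h ▸ ⟨3, rfl⟩)
  have hpodd : p % 2 = 1 := by
    rcases Nat.Prime.eq_two_or_odd hpprime with h | h
    · exact absurd h hp2
    · exact h
  have hmod4 : p % 4 = 1 ∨ p % 4 = 3 := by omega
  rcases hmod4 with h1mod | h3mod
  · exact hpow p hpprime (hsplit p hpprime h1mod hpnot6) _ hk1
  · -- exponent is even
    have hev : Even (n.factorization p) := by
      rw [Nat.factorization_def n hpprime]
      exact heven hpprime h3mod
    by_cases h0 : a p = 0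
    · obtain ⟨s, hs⟩ := hev
      have : n.factorization p = 2 * s := by omega
      rw [this, hecke_even_pow a h1 hpprime (hrec p hpprime) h0 s]
      apply pow_ne_zero
      simp only [ne_eq, neg_eq_zero, Nat.cast_eq_zero]
      exact hpprime.ne_zero
    · exact hpow p hpprime h0 _ hk1
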